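/- Let Σ be the collection of subsets A ⊆ {1,...,n} containing at most one element from each interval [2k·n^{1/3}, (2k+1)·n^{1/3}] for k = 0, 1, 2, ... and no elements outside these intervals. Then |Σ| ≥ (n^{1/3})^{⌊n^{2/3}/3⌋} for sufficiently large n, and every A ∈ Σ is n^{1/3}-separated. -/
import Mathlib



/-- `A` has at most one element from each interval `[2k·n^{1/3}, (2k+1)·n^{1/3}]`
and no elements outside these intervals. -/
def GoodSet (n : ℕ) (A : Finset ℕ) : Prop :=
  (∀ a ∈ A, ∃ k : ℕ, 2 * (k : ℝ) * (n : ℝ) ^ ((1 : ℝ) / 3) ≤ (a : ℝ) ∧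
      (a : ℝ) ≤ (2 * (k : ℝ) + 1) * (n : ℝ) ^ ((1 : ℝ) / 3)) ∧
  ∀ a ∈ A, ∀ a' ∈ A, ∀ k : ℕ,
    (2 * (k : ℝ) * (n : ℝ) ^ ((1 : ℝ) / 3) ≤ (a : ℝ) ∧
      (a : ℝ) ≤ (2 * (k : ℝ) + 1) * (n : ℝ) ^ ((1 : ℝ) / 3) ∧
      2 * (k : ℝ) * (n : ℝ) ^ ((1 : ℝ) / 3) ≤ (a' : ℝ) ∧
      (a' : ℝ) ≤ (2 * (k : ℝ) + 1) * (n : ℝ) ^ ((1 : ℝ) / 3)) → a = a'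

open scoped Classical in
noncomputable def SigmaColl (n : ℕ) : Finset (Finset ℕ) :=
  (Finset.Icc 1 n).powerset.filter (GoodSet n)


lemma interval_eq {m : ℝ} (hm : 0 < m) {v : ℝ} {j k : ℕ}
    (h1 : 2 * (j:ℝ) * m ≤ v) (h2 : v ≤ (2 * (j:ℝ) + 1) * m)
    (h3 : 2 * (k:ℝ) * m ≤ v) (h4 : v ≤ (2 * (k:ℝ) + 1) * m) : j = k := by
  by_contra hne
  rcases Nat.lt_or_ge j k with h | h
  · have hc : (j:ℝ) + 1 ≤ k := by exact_mod_cast h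
    nlinarith [mul_le_mul_of_nonneg_right (by linarith : 2*(j:ℝ)+2 ≤ 2*k) hm.le]
  · have h' : k < j := lt_of_le_of_ne h (Ne.symm hne)
    have hc : (k:ℝ) + 1 ≤ j := by exact_mod_cast h'
    nlinarith [mul_le_mul_of_nonneg_right (by linarith : 2*(k:ℝ)+2 ≤ 2*j) hm.le]

lemma count_aux (n S t : ℕ)
    (ht : (t:ℝ) + 1 ≤ (n:ℝ) ^ ((1:ℝ)/3))
    (hS : ∀ k : ℕ, k < S → (2*(k:ℝ)+1) * (n:ℝ) ^ ((1:ℝ)/3) ≤ n) :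
    t ^ S ≤ (SigmaColl n).card := by
  classical
  set m : ℝ := (n:ℝ) ^ ((1:ℝ)/3) with hmdef
  have hm0 : 0 < m := by
    have : (0:ℝ) ≤ t := Nat.cast_nonneg t
    linarith
  set e : (Fin S → Fin t) → Fin S → ℕ :=
    fun f k => ⌈2 * ((k:ℕ):ℝ) * m⌉₊ + 1 + (f k : ℕ) with hedef
  have hl : ∀ f (k : Fin S), 2 * ((k:ℕ):ℝ) * m ≤ (e f k : ℝ) := by
    intro f k
    have h1 : 2 * ((k:ℕ):ℝ) * m ≤ ⌈2 * ((k:ℕ):ℝ) * m⌉₊ := Nat.le_ceil _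
    have : (e f k : ℝ) = (⌈2 * ((k:ℕ):ℝ) * m⌉₊ : ℝ) + 1 + (f k : ℕ) := by
      rw [hedef]; push_cast; ring
    rw [this]
    have : (0:ℝ) ≤ ((f k : ℕ) : ℝ) := Nat.cast_nonneg _
    linarith
  have hh : ∀ f (k : Fin S), (e f k : ℝ) ≤ (2 * ((k:ℕ):ℝ) + 1) * m := by
    intro f k
    have h1 : (⌈2 * ((k:ℕ):ℝ) * m⌉₊ : ℝ) < 2 * ((k:ℕ):ℝ) * m + 1 :=
      Nat.ceil_lt_add_one (by positivity)
    have h2 : ((f k : ℕ) : ℝ) + 1 ≤ t := by exact_mod_cast (f k).2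
    have : (e f k : ℝ) = (⌈2 * ((k:ℕ):ℝ) * m⌉₊ : ℝ) + 1 + (f k : ℕ) := by
      rw [hedef]; push_cast; ring
    rw [this]; nlinarith
  set φ : (Fin S → Fin t) → Finset ℕ := fun f => Finset.image (e f) Finset.univ with hφdef
  have hmem : ∀ f, φ f ∈ SigmaColl n := by
    intro f
    rw [SigmaColl, Finset.mem_filter, Finset.mem_powerset]
    refine ⟨?_, ?_, ?_⟩
    · intro a ha
      simp only [hφdef, Finset.mem_image, Finset.mem_univ, true_and] at ha
      obtain ⟨k, rfl⟩ := ha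
      rw [Finset.mem_Icc]
      constructor
      · simp [hedef]; omega
      · have := (hh f k).trans (hS k k.2)
        exact_mod_cast this
    · intro a ha
      simp only [hφdef, Finset.mem_image, Finset.mem_univ, true_and] at ha
      obtain ⟨k, rfl⟩ := ha
      exact ⟨k, hl f k, hh f k⟩
    · intro a ha a' ha' k ⟨hk1, hk2, hk3, hk4⟩
      simp only [hφdef, Finset.mem_image, Finset.mem_univ, true_and] at ha ha'
      obtain ⟨k1, rfl⟩ := ha
      obtain ⟨k2, rfl⟩ := ha'
      have e1 : (k1:ℕ) = k := interval_eq hm0 (hl f k1) (hh f k1) hk1 hk2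
      have e2 : (k2:ℕ) = k := interval_eq hm0 (hl f k2) (hh f k2) hk3 hk4
      have : k1 = k2 := Fin.ext (e1.trans e2.symm)
      rw [this]
  have hinj : ∀ f g : Fin S → Fin t, φ f = φ g → f = g := by
    intro f g hfg
    funext k
    have : e f k ∈ φ g := by
      rw [← hfg]
      simp only [hφdef, Finset.mem_image, Finset.mem_univ, true_and]
      exact ⟨k, rfl⟩
    simp only [hφdef, Finset.mem_image, Finset.mem_univ, true_and] at this
    obtain ⟨k', hk'⟩ := this
    have ekk : (k':ℕ) = (k:ℕ) := by
      apply interval_eq hm0 (hl g k') (hh g k')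
      · rw [hk']; exact hl f k
      · rw [hk']; exact hh f k
    have hkk : k' = k := Fin.ext ekk
    subst hkk
    simp only [hedef] at hk'
    have : (f k' : ℕ) = (g k' : ℕ) := by omega
    exact Fin.ext this
  have hcard : (Finset.univ : Finset (Fin S → Fin t)).card ≤ (SigmaColl n).card := by
    apply Finset.card_le_card_of_injOn φ (fun f _ => hmem f)
    intro f _ g _ h
    exact hinj f g h
  simpa using hcard

theorem stmt16 : ∃ N : ℕ, ∀ n : ℕ, N ≤ n →
    (((n : ℝ) ^ ((1 : ℝ) / 3)) ^ (⌊(n : ℝ) ^ ((2 : ℝ) / 3) / 3⌋₊) ≤ ((SigmaColl n).card : ℝ)) ∧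
    ∀ A ∈ SigmaColl n, ∀ a ∈ A, ∀ a' ∈ A, a ≠ a' →
      (n : ℝ) ^ ((1 : ℝ) / 3) ≤ |(a : ℝ) - (a' : ℝ)| := by
  use 1000
  intro n hn
  have hn0 : (0:ℝ) < n := by
    have : (1000:ℝ) ≤ n := by exact_mod_cast hn
    linarith
  set m : ℝ := (n:ℝ) ^ ((1:ℝ)/3) with hmdef
  have hm0 : 0 < m := Real.rpow_pos_of_pos hn0 _
  have hcube : m ^ (3:ℕ) = n := by
    rw [hmdef, ← Real.rpow_natCast ((n:ℝ) ^ ((1:ℝ)/3)) 3, ← Real.rpow_mul hn0.le]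
    norm_num
  have hm7 : 7 ≤ m := by
    by_contra h
    push_neg at h
    have : m ^ (3:ℕ) < 7 ^ (3:ℕ) := by
      exact pow_lt_pow_left₀ h hm0.le (by norm_num)
    rw [hcube] at this
    norm_num at this
    have : (1000:ℝ) ≤ n := by exact_mod_cast hn
    linarith
  set x : ℝ := (n:ℝ) ^ ((2:ℝ)/3) with hxdef
  have hxm : x * m = n := by
    rw [hxdef, hmdef, ← Real.rpow_add hn0]
    norm_num
  constructor
  · -- counting part
    set K : ℕ := ⌊x / 3⌋₊ with hKdef
    set S : ℕ := (3 * K + 1) / 2 with hSdef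
    set t : ℕ := ⌊m⌋₊ - 1 with htdef
    have hfl : 7 ≤ ⌊m⌋₊ := Nat.le_floor (by exact_mod_cast hm7)
    have htcast : (t:ℝ) = (⌊m⌋₊ : ℝ) - 1 := by
      rw [htdef]; push_cast [Nat.cast_sub (by omega : 1 ≤ ⌊m⌋₊)]; ring
    have ht1 : (t:ℝ) + 1 ≤ m := by
      rw [htcast]
      have := Nat.floor_le hm0.le
      linarith
    have htm2 : m - 2 ≤ (t:ℝ) := by
      rw [htcast]
      have := Nat.lt_floor_add_one m
      linarith
    have h3K : (3:ℝ) * K ≤ x := by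
      have h1 : (K:ℝ) ≤ x / 3 := Nat.floor_le (by positivity)
      linarith
    have hSfeas : ∀ k : ℕ, k < S → (2*(k:ℝ)+1) * m ≤ n := by
      intro k hk
      have h2k : 2 * k + 1 ≤ 3 * K := by omega
      have h2k' : (2*(k:ℝ)+1) ≤ 3 * K := by exact_mod_cast h2k
      calc (2*(k:ℝ)+1) * m ≤ (3 * K) * m :=
            mul_le_mul_of_nonneg_right h2k' hm0.le
        _ ≤ x * m := mul_le_mul_of_nonneg_right h3K hm0.le
        _ = n := hxm
    have hcount := count_aux n S t ht1 hSfeas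
    have hcountR : (t:ℝ) ^ S ≤ ((SigmaColl n).card : ℝ) := by
      exact_mod_cast hcount
    have h1t : (1:ℝ) ≤ t := by linarith
    have h23 : m ^ 2 ≤ (t:ℝ) ^ 3 := by
      have ha : 7 * m ^ 2 ≤ m ^ 3 := by nlinarith [sq_nonneg m]
      have hb : m ^ 2 ≤ (m - 2) ^ 3 := by nlinarith
      have hc : (m - 2) ^ 3 ≤ (t:ℝ) ^ 3 := pow_le_pow_left₀ (by linarith) htm2 3
      linarith
    have key : m ^ K ≤ (t:ℝ) ^ S := by
      have hsq : (m ^ K) ^ 2 ≤ ((t:ℝ) ^ S) ^ 2 := by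
        calc (m ^ K) ^ 2 = (m ^ 2) ^ K := by
              rw [← pow_mul, ← pow_mul, mul_comm]
          _ ≤ ((t:ℝ) ^ 3) ^ K := pow_le_pow_left₀ (by positivity) h23 K
          _ = (t:ℝ) ^ (3 * K) := by rw [← pow_mul]
          _ ≤ (t:ℝ) ^ (2 * S) := pow_le_pow_right₀ h1t (by omega)
          _ = ((t:ℝ) ^ S) ^ 2 := by rw [← pow_mul, mul_comm]
      exact (pow_le_pow_iff_left₀ (by positivity) (by positivity) two_ne_zero).mp hsq
    exact key.trans hcountR
  · -- separation part
    intro A hA a ha a' ha' hne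
    classical
    rw [SigmaColl, Finset.mem_filter] at hA
    obtain ⟨-, h1, h2⟩ := hA
    obtain ⟨k, hk1, hk2⟩ := h1 a ha
    obtain ⟨k', hk1', hk2'⟩ := h1 a' ha'
    have hkk : k ≠ k' := by
      intro h
      exact hne (h2 a ha a' ha' k ⟨hk1, hk2, h ▸ hk1', h ▸ hk2'⟩)
    rcases Nat.lt_or_ge k k' with h | h
    · have hc : (k:ℝ) + 1 ≤ k' := by exact_mod_cast h
      have hmul : (2*(k:ℝ)+2) * m ≤ 2*(k':ℝ) * m :=
        mul_le_mul_of_nonneg_right (by linarith) hm0.le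
      have : m ≤ (a':ℝ) - a := by nlinarith
      rw [abs_sub_comm]
      calc m ≤ (a':ℝ) - a := this
        _ ≤ |(a':ℝ) - a| := le_abs_self _
    · have h' : k' < k := lt_of_le_of_ne h (Ne.symm hkk)
      have hc : (k':ℝ) + 1 ≤ k := by exact_mod_cast h'
      have hmul : (2*(k':ℝ)+2) * m ≤ 2*(k:ℝ) * m :=
        mul_le_mul_of_nonneg_right (by linarith) hm0.le
      have : m ≤ (a:ℝ) - a' := by nlinarith
      calc m ≤ (a:ℝ) - a' := this
        _ ≤ |(a:ℝ) - a'| := le_abs_self _
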